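/- Let S = C[x0, ..., xd] and let ℓ0, ..., ℓ_{d+1} be d+2 linear forms in S such that every subset of d+1 of them is linearly independent. Then the set of pairwise products {ℓi * ℓj : 0 <= i < j <= d+1}, consisting of binom(d+2, 2) quadratic forms, is linearly independent in the space S_2 of quadratic forms. -/

import Mathlib

open MvPolynomial

noncomputable section StmtAux

/-- Dot product with a fixed vector, as a linear map. -/
private def dotL {n : ℕ} (x : Fin n → ℂ) : (Fin n → ℂ) →ₗ[ℂ] ℂ where
  toFun v := ∑ j, v j * x j
  map_add' a b := by simp [add_mul, Finset.sum_add_distrib]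
  map_smul' r a := by simp [Finset.mul_sum, mul_assoc]

private lemma dotL_comm {n : ℕ} (x v : Fin n → ℂ) : dotL x v = dotL v x := by
  simp only [dotL, LinearMap.coe_mk, AddHom.coe_mk]
  exact Finset.sum_congr rfl fun j _ => mul_comm _ _

/-- The linear map sending a coefficient vector to the corresponding linear form. -/
private def GLin {n : ℕ} : (Fin n → ℂ) →ₗ[ℂ] MvPolynomial (Fin n) ℂ where
  toFun v := ∑ j, v j • X j
  map_add' a b := by simp [add_smul, Finset.sum_add_distrib]
  map_smul' r a := by simp [smul_smul, Finset.smul_sum]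

private lemma degree_one_single {n : ℕ} (m : Fin n →₀ ℕ) (h : m.degree = 1) :
    ∃ j, m = Finsupp.single j 1 := by
  have hs : m.support.Nonempty := by
    rcases Finset.eq_empty_or_nonempty m.support with he | hne
    · exfalso; rw [Finsupp.degree_apply, he] at h; simp at h
    · exact hne
  obtain ⟨j, hj⟩ := hs
  have hj1 : m j = 1 := by
    have hle : m j ≤ 1 := by
      rw [← h, Finsupp.degree_apply]
      exact Finset.single_le_sum (fun i _ => Nat.zero_le _) hj
    have hge : 1 ≤ m j := Nat.one_le_iff_ne_zero.2 (Finsupp.mem_support_iff.1 hj)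
    omega
  have hrest : ∑ i ∈ m.support.erase j, m i = 0 := by
    have := Finset.sum_erase_add m.support m hj
    rw [Finsupp.degree_apply] at h
    omega
  refine ⟨j, Finsupp.ext fun i => ?_⟩
  by_cases hij : i = j
  · subst hij; simp [hj1]
  · rw [Finsupp.single_apply, if_neg (fun hh => hij hh.symm)]
    by_cases hmem : i ∈ m.support
    · exact (Finset.sum_eq_zero_iff.1 hrest) i (Finset.mem_erase.2 ⟨hij, hmem⟩)
    · exact Finsupp.notMem_support_iff.1 hmem

private lemma hom_one_eq {n : ℕ} (p : MvPolynomial (Fin n) ℂ) (hp : p.IsHomogeneous 1) :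
    p = GLin (fun j => coeff (Finsupp.single j 1) p) := by
  have : GLin (fun j => coeff (Finsupp.single j 1) p)
      = ∑ j, (coeff (Finsupp.single j 1) p) • X j := rfl
  rw [this]
  ext m
  rw [MvPolynomial.coeff_sum]
  simp only [coeff_smul, coeff_X', smul_eq_mul, mul_ite, mul_one, mul_zero]
  by_cases hm : ∃ j, m = Finsupp.single j 1
  · obtain ⟨j0, rfl⟩ := hm
    rw [Finset.sum_eq_single j0]
    · simp
    · intro b _ hb
      rw [if_neg]
      intro hc
      exact hb (by
        have := (Finsupp.single_left_inj (one_ne_zero (α := ℕ))).1 hc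
        exact this)
    · intro hmem; exact absurd (Finset.mem_univ j0) hmem
  · have h1 : coeff m p = 0 := by
      apply hp.coeff_eq_zero
      intro hd
      exact hm (degree_one_single m hd)
    rw [h1, Finset.sum_eq_zero]
    intro j _
    rw [if_neg]
    intro hc
    exact hm ⟨j, hc.symm⟩

private lemma eval_GLin {n : ℕ} (x : Fin n → ℂ) (v : Fin n → ℂ) :
    eval x (GLin v) = dotL x v := by
  simp only [GLin, dotL, LinearMap.coe_mk, AddHom.coe_mk]
  rw [map_sum]
  exact Finset.sum_congr rfl fun j _ => by simp [smul_eq_C_mul]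

/-- Key linear algebra lemma: given `n+2` coefficient vectors in `ℂ^{n+1}` with any `n+1`
of them linearly independent, for each pair `k ≠ l` there is a point where all other
forms vanish but the `k`-th and `l`-th take nonzero values. -/
private lemma exists_point {n : ℕ} (c : Fin (n+2) → (Fin (n+1) → ℂ))
    (hind : ∀ s : Finset (Fin (n+2)), s.card = n + 1 →
      LinearIndependent ℂ (fun i : s => c i.1))
    (k l : Fin (n+2)) (hkl : k ≠ l) :
    ∃ x : Fin (n+1) → ℂ, (∀ i, i ≠ k → i ≠ l → dotL x (c i) = 0) ∧
      dotL x (c k) ≠ 0 ∧ dotL x (c l) ≠ 0 := by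
  classical
  set S : Finset (Fin (n+2)) := ({k, l} : Finset (Fin (n+2)))ᶜ with hS
  have hScard : S.card = n := by
    rw [hS, Finset.card_compl, Finset.card_insert_of_notMem (by simpa using hkl),
      Finset.card_singleton, Fintype.card_fin]
    omega
  -- the map recording the values of the n "other" forms
  set A : (Fin (n+1) → ℂ) →ₗ[ℂ] (S → ℂ) := LinearMap.pi (fun i : S => dotL (c i.1)) with hA
  have hnotinj : ¬ Function.Injective A := by
    intro hinj
    have h1 : Module.finrank ℂ (Fin (n+1) → ℂ) ≤ Module.finrank ℂ (S → ℂ) :=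
      LinearMap.finrank_le_finrank_of_injective hinj
    rw [Module.finrank_fintype_fun_eq_card, Module.finrank_fintype_fun_eq_card,
      Fintype.card_fin, Fintype.card_coe, hScard] at h1
    omega
  have hker : ∃ x : Fin (n+1) → ℂ, x ≠ 0 ∧ A x = 0 := by
    rw [← LinearMap.ker_eq_bot] at hnotinj
    obtain ⟨x, hx, hx0⟩ := Submodule.exists_mem_ne_zero_of_ne_bot hnotinj
    exact ⟨x, hx0, hx⟩
  obtain ⟨x, hx0, hAx⟩ := hker
  have hvan : ∀ i, i ≠ k → i ≠ l → dotL (c i) x = 0 := by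
    intro i hik hil
    have hiS : i ∈ S := by
      rw [hS, Finset.mem_compl]; simp [hik, hil]
    have := congrFun hAx ⟨i, hiS⟩
    simpa [hA, LinearMap.pi_apply] using this
  -- a generic nonzero-ness argument
  have key : ∀ a : Fin (n+2), (∀ i, i ≠ a → dotL (c i) x = 0) → False := by
    intro a hall
    set T : Finset (Fin (n+2)) := ({a} : Finset (Fin (n+2)))ᶜ with hT
    have hTcard : T.card = n + 1 := by
      rw [hT, Finset.card_compl, Finset.card_singleton, Fintype.card_fin]
      omega
    have hli : LinearIndependent ℂ (fun i : T => c i.1) := hind T hTcard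
    have hne : Nonempty T :=
      Finset.Nonempty.to_subtype (Finset.card_pos.1 (by rw [hTcard]; omega))
    have hspan : Submodule.span ℂ (Set.range (fun i : T => c i.1)) = ⊤ :=
      hli.span_eq_top_of_card_eq_finrank (by
        rw [Fintype.card_coe, hTcard, Module.finrank_fintype_fun_eq_card, Fintype.card_fin])
    have hzero : dotL x = (0 : (Fin (n+1) → ℂ) →ₗ[ℂ] ℂ) := by
      apply LinearMap.ext_on hspan
      rintro v ⟨⟨i, hiT⟩, rfl⟩
      have hia : i ≠ a := by
        rw [hT, Finset.mem_compl, Finset.mem_singleton] at hiT; exact hiT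
      rw [dotL_comm]
      simpa using hall i hia
    apply hx0
    funext j
    have := congrFun (congrArg (fun f : (Fin (n+1) → ℂ) →ₗ[ℂ] ℂ => (f : (Fin (n+1) → ℂ) → ℂ))
      hzero) (Pi.single j 1)
    simp only [dotL, LinearMap.coe_mk, AddHom.coe_mk, LinearMap.zero_apply] at this
    rw [Finset.sum_eq_single j (fun b _ hb => by simp [Pi.single_apply, hb])
      (fun hmem => absurd (Finset.mem_univ j) hmem)] at this
    simpa using this
  refine ⟨x, ?_, ?_, ?_⟩
  · intro i hik hil; rw [dotL_comm]; exact hvan i hik hil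
  · rw [dotL_comm]
    intro hc
    exact key l (fun i hil => by
      by_cases hik : i = k
      · subst hik; exact hc
      · exact hvan i hik hil)
  · rw [dotL_comm]
    intro hc
    exact key k (fun i hik => by
      by_cases hil : i = l
      · subst hil; exact hc
      · exact hvan i hik hil)

end StmtAux

/-- If any `d+1` of the `d+2` linear forms `ℓ 0, …, ℓ (d+1)` in `d+1` variables are
linearly independent, then the pairwise products `ℓ i * ℓ j` (for `i < j`) are linearly
independent quadratic forms. -/
theorem stmt_3 (d : ℕ) (ℓ : Fin (d+2) → MvPolynomial (Fin (d+1)) ℂ)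
    (hhom : ∀ i, (ℓ i).IsHomogeneous 1)
    (hgen : ∀ s : Finset (Fin (d+2)), s.card = d + 1 →
      LinearIndependent ℂ (fun i : s => ℓ i.1)) :
    LinearIndependent ℂ
      (fun p : {p : Fin (d+2) × Fin (d+2) // p.1 < p.2} => ℓ p.1.1 * ℓ p.1.2) := by
  classical
  rw [Fintype.linearIndependent_iff]
  intro g hg q
  obtain ⟨⟨k, l⟩, hkl⟩ := q
  simp only at hkl
  -- coefficient vectors of the linear forms
  set c : Fin (d+2) → (Fin (d+1) → ℂ) := fun i j => coeff (Finsupp.single j 1) (ℓ i) with hc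
  have hGc : ∀ i, ℓ i = GLin (c i) := fun i => hom_one_eq (ℓ i) (hhom i)
  have hindc : ∀ s : Finset (Fin (d+2)), s.card = d + 1 →
      LinearIndependent ℂ (fun i : s => c i.1) := by
    intro s hs
    have hli := hgen s hs
    have heq : (fun i : s => ℓ i.1) = GLin ∘ (fun i : s => c i.1) := by
      funext i; exact hGc i.1
    rw [heq] at hli
    exact hli.of_comp GLin
  obtain ⟨x, hvan, hk, hl⟩ := exists_point c hindc k l (ne_of_lt hkl)
  have hev : ∀ i, eval x (ℓ i) = dotL x (c i) := fun i => by rw [hGc i, eval_GLin]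
  have h0 : ∑ p : {p : Fin (d+2) × Fin (d+2) // p.1 < p.2},
      g p * (dotL x (c p.1.1) * dotL x (c p.1.2)) = 0 := by
    have h := congrArg (eval x) hg
    rw [map_sum, map_zero] at h
    rw [← h]
    apply Finset.sum_congr rfl
    intro p _
    rw [smul_eq_C_mul, map_mul, map_mul, eval_C, hev, hev]
  have hterm : ∀ p : {p : Fin (d+2) × Fin (d+2) // p.1 < p.2},
      p ≠ ⟨(k, l), hkl⟩ →
      g p * (dotL x (c p.1.1) * dotL x (c p.1.2)) = 0 := by
    intro p hpq
    by_cases h1 : p.1.1 = k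
    · by_cases h2 : p.1.2 = l
      · exact absurd (Subtype.ext (Prod.ext h1 h2)) hpq
      · have hne_k : p.1.2 ≠ k := by
          intro h
          have := p.2
          rw [h1, h] at this
          exact lt_irrefl k this
        rw [hvan p.1.2 hne_k h2, mul_zero, mul_zero]
    · by_cases h2 : p.1.1 = l
      · have hgt : l < p.1.2 := h2 ▸ p.2
        rw [hvan p.1.2 (ne_of_gt (lt_trans hkl hgt)) (ne_of_gt hgt), mul_zero, mul_zero]
      · rw [hvan p.1.1 h1 h2, zero_mul, mul_zero]
  have hsum : ∑ p : {p : Fin (d+2) × Fin (d+2) // p.1 < p.2},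
      g p * (dotL x (c p.1.1) * dotL x (c p.1.2))
      = g ⟨(k, l), hkl⟩ * (dotL x (c k) * dotL x (c l)) :=
    Finset.sum_eq_single _ (fun p _ hpq => hterm p hpq)
      (fun h => absurd (Finset.mem_univ _) h)
  rw [hsum] at h0
  exact (mul_eq_zero.1 h0).resolve_right (mul_ne_zero hk hl)
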